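/- Let $p$ be a prime, $\mathcal{M} \subseteq \mathbb{F}_p^*$ with $|\mathcal{M}| = M$, and let $\mathcal{P}_N$ denote the set of primes $q \le N$ (viewed modulo $p$, with $N < p$). Then the number $J$ of quadruples $(q, r, m, n)$ with $q, r \in \mathcal{P}_N$, $m, n \in \mathcal{M}$, and $qm \equiv rn \pmod p$ satisfies $J \ll NM/\log N + M^2 + N^2 M^2 / p$. -/

import Mathlib

open Finset


set_option maxHeartbeats 1000000 in
lemma aux_count (p N a b : ℕ) (hp : p.Prime) (hNp : N < p)
    (ha : a.Prime) (hb : b.Prime) (hba : b < a) (haN : a ≤ N)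
    (S : Finset (ℕ × ℕ))
    (hP : ∀ x ∈ S, x.1.Prime ∧ x.2.Prime ∧ x.1 ≤ N ∧ x.2 ≤ N ∧ x.1 ≠ x.2)
    (hcong : ∀ x ∈ S, (p : ℤ) ∣ ((x.1 : ℤ) * b - a * x.2))
    (hone : 1 < S.card) :
    (S.card : ℝ) ≤ 1 + 5 * (N : ℝ) ^ 2 / p := by
  have hp0 : (0:ℤ) < p := by exact_mod_cast hp.pos
  have ha0 : 0 < a := ha.pos
  have hb0 : 0 < b := hb.pos
  have habs : ∀ x ∈ S, -( (N:ℤ) * a) ≤ (x.1 : ℤ) * b - a * x.2 ∧ (x.1 : ℤ) * b - a * x.2 ≤ (N:ℤ) * a := by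
    intro x hx
    obtain ⟨hq, hr, hqN, hrN, hqr⟩ := hP x hx
    have hx1 : (x.1 : ℤ) ≤ N := by exact_mod_cast hqN
    have hx2 : (x.2 : ℤ) ≤ N := by exact_mod_cast hrN
    have hba' : (b : ℤ) ≤ a := by exact_mod_cast hba.le
    have haN' : (a : ℤ) ≤ N := by exact_mod_cast haN
    have h1 : (x.1 : ℤ) * b ≤ (N : ℤ) * a := by
      nlinarith [Int.natCast_nonneg x.1, Int.natCast_nonneg b]
    have h2 : (a : ℤ) * x.2 ≤ (N:ℤ) * a := by
      nlinarith [Int.natCast_nonneg a, Int.natCast_nonneg x.2]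
    constructor
    · nlinarith [mul_nonneg (Int.natCast_nonneg x.1) (Int.natCast_nonneg b)]
    · nlinarith [mul_nonneg (Int.natCast_nonneg a) (Int.natCast_nonneg x.2)]
  have hpNa : (p : ℤ) ≤ (N : ℤ) * a := by
    obtain ⟨x, hxS, hxab⟩ := S.exists_mem_ne hone (a, b)
    obtain ⟨hq, hr, hqN, hrN, hqr⟩ := hP x hxS
    have hxne : (x.1 : ℤ) * b - a * x.2 ≠ 0 := by
      intro h
      have h' : x.1 * b = a * x.2 := by
        have : (x.1 : ℤ) * b = (a : ℤ) * x.2 := by linarith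
        exact_mod_cast this
      have hdvd : x.1 ∣ a * x.2 := ⟨b, h'.symm⟩
      rcases (Nat.Prime.dvd_mul hq).mp hdvd with h1 | h1
      · have hqa : x.1 = a := (Nat.prime_dvd_prime_iff_eq hq ha).mp h1
        have hbr : b = x.2 := by
          rw [hqa] at h'
          exact Nat.eq_of_mul_eq_mul_left ha0 h'
        exact hxab (Prod.ext hqa hbr.symm)
      · exact hqr ((Nat.prime_dvd_prime_iff_eq hq hr).mp h1)
    have hle := Int.le_of_dvd (abs_pos.mpr hxne) ((dvd_abs _ _).mpr (hcong x hxS))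
    calc (p:ℤ) ≤ |(x.1 : ℤ) * b - a * x.2| := hle
      _ ≤ (N:ℤ) * a := abs_le.mpr (habs x hxS)
  set K : ℤ := ((N : ℤ) * a) / p with hK
  have hmaps : ∀ x ∈ S, (((x.1 : ℤ) * b - a * x.2) / p, x.1 / a) ∈
      (Finset.Icc (-K) K ×ˢ Finset.Icc 0 (N / a)) := by
    intro x hx
    obtain ⟨hlo, hhi⟩ := habs x hx
    have hd := hcong x hx
    have hmul : (((x.1 : ℤ) * b - a * x.2) / p) * p = (x.1 : ℤ) * b - a * x.2 :=
      Int.ediv_mul_cancel hd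
    refine Finset.mem_product.mpr ⟨Finset.mem_Icc.mpr ⟨?_, ?_⟩,
      Finset.mem_Icc.mpr ⟨Nat.zero_le _, Nat.div_le_div_right (hP x hx).2.2.1⟩⟩
    · rw [neg_le, hK, Int.le_ediv_iff_mul_le hp0]
      nlinarith [hmul]
    · rw [hK, Int.le_ediv_iff_mul_le hp0]
      nlinarith [hmul]
  have hinjon : Set.InjOn (fun x : ℕ × ℕ => (((x.1 : ℤ) * b - a * x.2) / p, x.1 / a)) S := by
    intro x hx y hy hxy
    simp only [Prod.mk.injEq] at hxy
    obtain ⟨h1, h2⟩ := hxy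
    have hdx := hcong x hx
    have hdy := hcong y hy
    have hxeq : (x.1 : ℤ) * b - a * x.2 = (y.1 : ℤ) * b - a * y.2 := by
      rw [← Int.ediv_mul_cancel hdx, ← Int.ediv_mul_cancel hdy, h1]
    have hbd : (b : ℤ) * ((x.1 : ℤ) - y.1) = (a : ℤ) * ((x.2 : ℤ) - y.2) := by
      linear_combination hxeq
    have haP : Prime (a : ℤ) := Nat.prime_iff_prime_int.mp ha
    have hadvd : (a : ℤ) ∣ (x.1 : ℤ) - y.1 := by
      rcases (haP.dvd_mul.mp ⟨(x.2 : ℤ) - y.2, hbd⟩) with h | h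
      · exfalso
        have : a ∣ b := by exact_mod_cast h
        exact absurd (Nat.le_of_dvd hb0 this) (not_le.mpr hba)
      · exact h
    have hmod : x.1 % a = y.1 % a := (Nat.modEq_iff_dvd.mpr hadvd).symm
    have hq : x.1 = y.1 := by
      rw [← Nat.div_add_mod x.1 a, ← Nat.div_add_mod y.1 a, h2, hmod]
    have hr : x.2 = y.2 := by
      have hz : (a : ℤ) * ((x.2 : ℤ) - y.2) = 0 := by
        rw [← hbd, hq]; ring
      rcases mul_eq_zero.mp hz with h | h
      · exact absurd h (by exact_mod_cast ha0.ne')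
      · have : (x.2 : ℤ) = y.2 := by linarith
        exact_mod_cast this
    exact Prod.ext hq hr
  have hcardle := Finset.card_le_card_of_injOn _ hmaps hinjon
  have hK0 : 0 ≤ K := Int.ediv_nonneg (by positivity) hp0.le
  have h2K : (((2*K+1).toNat : ℕ) : ℝ) = 2*(K:ℝ)+1 := by
    have h := Int.toNat_of_nonneg (show (0:ℤ) ≤ 2*K+1 by linarith)
    have h' : (((2*K+1).toNat : ℕ) : ℤ) = 2*K+1 := h
    exact_mod_cast h'
  have hcardT : (((Finset.Icc (-K) K ×ˢ Finset.Icc 0 (N / a)).card : ℝ))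
      = (2 * (K:ℝ) + 1) * (((N/a : ℕ) : ℝ) + 1) := by
    have h1 : K + 1 - -K = 2*K + 1 := by ring
    rw [Finset.card_product, Int.card_Icc, Nat.card_Icc, h1, Nat.cast_mul, h2K, Nat.sub_zero]
    push_cast
    ring
  have hP0 : (0:ℝ) < (p:ℝ) := by exact_mod_cast hp.pos
  have hA0 : (0:ℝ) < (a:ℝ) := by exact_mod_cast ha0
  have hN0' : 0 < N := lt_of_lt_of_le ha0 haN
  have hN0 : (0:ℝ) < (N:ℝ) := by exact_mod_cast hN0'
  have hx0 : (0:ℝ) ≤ (K:ℝ) := by exact_mod_cast hK0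
  have hy0 : (0:ℝ) ≤ ((N/a : ℕ) : ℝ) := by positivity
  have hxP : (K:ℝ) * p ≤ (N:ℝ) * a := by
    have h := Int.ediv_mul_le ((N:ℤ) * a) (show (p:ℤ) ≠ 0 from hp0.ne')
    rw [← hK] at h
    exact_mod_cast h
  have hyA : ((N/a : ℕ) : ℝ) * a ≤ (N:ℝ) := by
    have h : (a : ℝ) * ((N/a : ℕ) : ℝ) ≤ N := by
      have := Nat.div_mul_le_self N a
      calc (a:ℝ) * ((N/a : ℕ) : ℝ) = ((N/a*a : ℕ) : ℝ) := by push_cast; ring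
        _ ≤ N := by exact_mod_cast this
    linarith [h]
  have hPA : (p:ℝ) ≤ (N:ℝ) * a := by exact_mod_cast hpNa
  have hAN : (a:ℝ) ≤ (N:ℝ) := by exact_mod_cast haN
  have e1 : (K:ℝ) * p ≤ (N:ℝ) * N := le_trans hxP (by nlinarith)
  have e2 : ((N/a : ℕ) : ℝ) * p ≤ (N:ℝ) * N := by
    calc ((N/a : ℕ) : ℝ) * p ≤ ((N/a : ℕ) : ℝ) * ((N:ℝ)*a) := by nlinarith
      _ = (N:ℝ) * (((N/a : ℕ) : ℝ) * a) := by ring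
      _ ≤ (N:ℝ) * N := by nlinarith
  have e3 : (K:ℝ) * ((N/a : ℕ) : ℝ) * p ≤ (N:ℝ) * N := by
    calc (K:ℝ) * ((N/a : ℕ) : ℝ) * p = ((K:ℝ) * p) * ((N/a : ℕ) : ℝ) := by ring
      _ ≤ ((N:ℝ) * a) * ((N/a : ℕ) : ℝ) := by nlinarith
      _ = (N:ℝ) * (((N/a : ℕ) : ℝ) * a) := by ring
      _ ≤ (N:ℝ) * N := by nlinarith
  have hfin : (2 * (K:ℝ) + 1) * (((N/a : ℕ) : ℝ) + 1) ≤ 1 + 5 * (N:ℝ)^2 / p := by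
    have hrw : 1 + 5 * (N:ℝ)^2 / p = ((p:ℝ) + 5 * N^2) / p := by field_simp
    rw [hrw, le_div_iff₀ hP0]
    nlinarith [e1, e2, e3]
  calc (S.card : ℝ) ≤ (((Finset.Icc (-K) K ×ˢ Finset.Icc 0 (N / a)).card : ℝ)) := by exact_mod_cast hcardle
    _ = (2 * (K:ℝ) + 1) * (((N/a : ℕ) : ℝ) + 1) := hcardT
    _ ≤ 1 + 5 * (N:ℝ)^2 / p := hfin


lemma cheb (N : ℕ) (hN2 : 2 ≤ N) :
    ((((Finset.Icc 1 N).filter Nat.Prime).card : ℝ)) ≤ 5 * N / Real.log N := by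
  set P := (Finset.Icc 1 N).filter Nat.Prime with hP
  set K := Nat.sqrt N with hKd
  have hN0 : (0:ℝ) < N := by positivity
  have hN1 : (1:ℝ) < N := by exact_mod_cast hN2.trans_lt' one_lt_two
  have hlogN : 0 < Real.log N := Real.log_pos hN1
  -- split
  have hsplit : P.card = (P.filter (fun q => q ≤ K)).card + (P.filter (fun q => ¬ q ≤ K)).card :=
    (Finset.card_filter_add_card_filter_not _).symm
  -- small primes
  have hsmall : (P.filter (fun q => q ≤ K)).card ≤ K := by
    calc (P.filter (fun q => q ≤ K)).card ≤ (Finset.Icc 1 K).card := by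
          apply Finset.card_le_card
          intro q hq
          simp only [hP, Finset.mem_filter, Finset.mem_Icc] at hq ⊢
          exact ⟨hq.1.1.1, hq.2⟩
      _ = K := by rw [Nat.card_Icc]; omega
  -- large primes
  set c₂ := (P.filter (fun q => ¬ q ≤ K)).card with hc2
  have hbig : (K+1) ^ c₂ ≤ 4 ^ N := by
    calc (K+1) ^ c₂ ≤ ∏ q ∈ P.filter (fun q => ¬ q ≤ K), q := by
          apply Finset.pow_card_le_prod
          intro q hq
          simp only [Finset.mem_filter, not_le] at hq
          omega
      _ ≤ ∏ q ∈ Finset.filter Nat.Prime (Finset.range (N+1)), q := by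
          apply Finset.prod_le_prod_of_subset_of_one_le'
          · intro q hq
            simp only [hP, Finset.mem_filter, Finset.mem_Icc, Finset.mem_range] at hq ⊢
            exact ⟨by omega, hq.1.2⟩
          · intro q hq _
            exact (Finset.mem_filter.mp hq).2.one_lt.le
      _ ≤ 4 ^ N := primorial_le_4_pow N
  have hc2le : (c₂ : ℝ) * Real.log (K+1) ≤ N * Real.log 4 := by
    have h1 : ((K+1:ℕ) : ℝ) ^ c₂ ≤ (4:ℝ) ^ N := by exact_mod_cast hbig
    have h2 := Real.log_le_log (by positivity) h1
    rw [Real.log_pow, Real.log_pow] at h2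
    exact_mod_cast h2
  have hKlog : Real.log N ≤ 2 * Real.log (K+1) := by
    have h1 : (N:ℝ) ≤ ((K+1:ℕ):ℝ)^2 := by exact_mod_cast (Nat.lt_succ_sqrt' N).le
    have h2 := Real.log_le_log hN0 h1
    rw [Real.log_pow] at h2
    push_cast at h2 ⊢
    linarith
  have hlogK1 : 0 < Real.log ((K:ℝ)+1) := by linarith
  have hc2R : (c₂ : ℝ) ≤ 2 * Real.log 4 * N / Real.log N := by
    rw [le_div_iff₀ hlogN]
    calc (c₂:ℝ) * Real.log N ≤ (c₂:ℝ) * (2 * Real.log ((K:ℝ)+1)) := by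
          apply mul_le_mul_of_nonneg_left _ (Nat.cast_nonneg c₂)
          exact hKlog
      _ = 2 * ((c₂:ℝ) * Real.log ((K:ℝ)+1)) := by ring
      _ ≤ 2 * ((N:ℝ) * Real.log 4) := by
          apply mul_le_mul_of_nonneg_left _ (by norm_num)
          exact hc2le
      _ = 2 * Real.log 4 * N := by ring
  have hKR : (K : ℝ) ≤ 2 * N / Real.log N := by
    have hsq : (K : ℝ) ≤ Real.sqrt N := by
      rw [show (K:ℝ) = ((K:ℕ):ℝ) from rfl]
      rw [Real.le_sqrt (by positivity) hN0.le]
      exact_mod_cast Nat.sqrt_le' N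
    have hlogsqrt : Real.log N ≤ 2 * Real.sqrt N := by
      have h := Real.log_le_sub_one_of_pos (show (0:ℝ) < Real.sqrt N by positivity)
      rw [Real.log_sqrt hN0.le] at h
      linarith [Real.sqrt_nonneg (N:ℝ)]
    rw [le_div_iff₀ hlogN]
    calc (K:ℝ) * Real.log N ≤ Real.sqrt N * (2 * Real.sqrt N) := by
          apply mul_le_mul hsq hlogsqrt hlogN.le (Real.sqrt_nonneg _)
      _ = 2 * (Real.sqrt N * Real.sqrt N) := by ring
      _ = 2 * N := by rw [Real.mul_self_sqrt hN0.le]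
  have hlog4 : Real.log 4 ≤ 1.4 := by
    have h2 : Real.log 4 = 2 * Real.log 2 := by
      rw [show (4:ℝ) = 2^2 by norm_num, Real.log_pow]; push_cast; ring
    nlinarith [Real.log_two_lt_d9]
  calc (P.card : ℝ) = ((P.filter (fun q => q ≤ K)).card : ℝ) + c₂ := by exact_mod_cast hsplit
    _ ≤ (K : ℝ) + (2 * Real.log 4 * N / Real.log N) := by
        have : ((P.filter (fun q => q ≤ K)).card : ℝ) ≤ K := by exact_mod_cast hsmall
        linarith
    _ ≤ 5 * N / Real.log N := by
        rw [le_div_iff₀ hlogN]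
        have hexp : ((K:ℝ) + 2 * Real.log 4 * N / Real.log N) * Real.log N
            = (K:ℝ) * Real.log N + 2 * Real.log 4 * N := by
          field_simp
        rw [add_mul]
        have hK2 : (K:ℝ) * Real.log N ≤ 2 * N := by
          rw [le_div_iff₀ hlogN] at hKR
          linarith
        have hc3 : (2 * Real.log 4 * N / Real.log N) * Real.log N = 2 * Real.log 4 * N := by
          field_simp
        rw [hc3]
        have hlog4N : 2 * Real.log 4 * N ≤ 2 * 1.4 * N := by nlinarith
        nlinarith

lemma key_count (p N : ℕ) (hp : p.Prime) (hN2 : 2 ≤ N) (hNp : N < p)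
    (m n : ZMod p) (hm : m ≠ 0) (hn : n ≠ 0) :
    (((((Finset.Icc 1 N).filter Nat.Prime) ×ˢ ((Finset.Icc 1 N).filter Nat.Prime)).filter
        (fun x : ℕ × ℕ => x.1 ≠ x.2 ∧ (x.1 : ZMod p) * m = (x.2 : ZMod p) * n)).card : ℝ)
      ≤ 1 + 5 * (N:ℝ) ^ 2 / p := by
  haveI : Fact p.Prime := ⟨hp⟩
  set S := ((((Finset.Icc 1 N).filter Nat.Prime) ×ˢ ((Finset.Icc 1 N).filter Nat.Prime)).filter
      (fun x : ℕ × ℕ => x.1 ≠ x.2 ∧ (x.1 : ZMod p) * m = (x.2 : ZMod p) * n)) with hSdef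
  have hmem : ∀ x ∈ S, x.1.Prime ∧ x.2.Prime ∧ x.1 ≤ N ∧ x.2 ≤ N ∧ x.1 ≠ x.2
      ∧ (x.1 : ZMod p) * m = (x.2 : ZMod p) * n := by
    intro x hx
    rw [hSdef, Finset.mem_filter, Finset.mem_product] at hx
    obtain ⟨⟨h1, h2⟩, h3, h4⟩ := hx
    rw [Finset.mem_filter, Finset.mem_Icc] at h1 h2
    exact ⟨h1.2, h2.2, h1.1.2, h2.1.2, h3, h4⟩
  rcases le_or_gt S.card 1 with h | h
  · have h5 : (0:ℝ) ≤ 5*(N:ℝ)^2/p := by positivity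
    have h6 : (S.card : ℝ) ≤ 1 := by exact_mod_cast h
    linarith
  obtain ⟨ab, habS⟩ := Finset.card_pos.mp (show 0 < S.card by omega)
  obtain ⟨hap, hbp, haN, hbN, hane, habc⟩ := hmem ab habS
  have hcong : ∀ x ∈ S, (p : ℤ) ∣ ((x.1 : ℤ) * ab.2 - ab.1 * x.2) := by
    intro x hx
    have e1 := (hmem x hx).2.2.2.2.2
    have hfield : (x.1 : ZMod p) * ab.2 = (ab.1 : ZMod p) * x.2 := by
      have h0 : ((x.1 : ZMod p) * ab.2 - (ab.1 : ZMod p) * x.2) * n = 0 := by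
        linear_combination (ab.1 : ZMod p) * e1 - (x.1 : ZMod p) * habc
      rcases mul_eq_zero.mp h0 with h' | h'
      · exact sub_eq_zero.mp h'
      · exact absurd h' hn
    apply (ZMod.intCast_zmod_eq_zero_iff_dvd _ p).mp
    push_cast
    rw [sub_eq_zero]
    exact hfield
  rcases lt_or_gt_of_ne hane with hab | hab
  · -- ab.1 < ab.2 : swap
    set S' := S.image Prod.swap with hS'def
    have hcardeq : S'.card = S.card := Finset.card_image_of_injective S Prod.swap_injective
    have hP' : ∀ x ∈ S', x.1.Prime ∧ x.2.Prime ∧ x.1 ≤ N ∧ x.2 ≤ N ∧ x.1 ≠ x.2 := by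
      intro x hx
      rw [hS'def, Finset.mem_image] at hx
      obtain ⟨y, hy, rfl⟩ := hx
      obtain ⟨h1, h2, h3, h4, h5, _⟩ := hmem y hy
      exact ⟨h2, h1, h4, h3, fun hh => h5 hh.symm⟩
    have hcong' : ∀ x ∈ S', (p : ℤ) ∣ ((x.1 : ℤ) * ab.1 - ab.2 * x.2) := by
      intro x hx
      rw [hS'def, Finset.mem_image] at hx
      obtain ⟨y, hy, rfl⟩ := hx
      have := hcong y hy
      have hr : ((y.swap.1 : ℤ) * ab.1 - ab.2 * y.swap.2) = -((y.1 : ℤ) * ab.2 - ab.1 * y.2) := by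
        simp [Prod.swap]; ring
      rw [hr]
      exact dvd_neg.mpr this
    have := aux_count p N ab.2 ab.1 hp hNp hbp hap hab hbN S' hP' hcong' (by omega)
    calc (S.card : ℝ) = (S'.card : ℝ) := by rw [hcardeq]
      _ ≤ 1 + 5 * (N:ℝ) ^ 2 / p := this
  · exact aux_count p N ab.1 ab.2 hp hNp hap hbp hab haN S
      (fun x hx => ⟨(hmem x hx).1, (hmem x hx).2.1, (hmem x hx).2.2.1, (hmem x hx).2.2.2.1,
        (hmem x hx).2.2.2.2.1⟩) hcong h

theorem stmt_7 :
    ∃ C : ℝ, 0 < C ∧ ∀ (p N : ℕ), p.Prime → 2 ≤ N → N < p →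
      ∀ (M : Finset (ZMod p)), (∀ m ∈ M, m ≠ 0) →
      (((((Finset.Icc 1 N).filter Nat.Prime) ×ˢ ((Finset.Icc 1 N).filter Nat.Prime)
          ×ˢ (M ×ˢ M)).filter
          (fun t : ℕ × ℕ × (ZMod p × ZMod p) =>
            (t.1 : ZMod p) * t.2.2.1 = (t.2.1 : ZMod p) * t.2.2.2)).card : ℝ)
        ≤ C * ((N : ℝ) * M.card / Real.log N + (M.card : ℝ) ^ 2
            + (N : ℝ) ^ 2 * (M.card : ℝ) ^ 2 / p) := by
  refine ⟨5, by norm_num, ?_⟩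
  intro p N hp hN2 hNp M hM
  haveI : Fact p.Prime := ⟨hp⟩
  set P := (Finset.Icc 1 N).filter Nat.Prime with hPdef
  set F := ((P ×ˢ P ×ˢ (M ×ˢ M)).filter
      (fun t : ℕ × ℕ × (ZMod p × ZMod p) =>
        (t.1 : ZMod p) * t.2.2.1 = (t.2.1 : ZMod p) * t.2.2.2)) with hFdef
  have hmemF : ∀ t ∈ F, t.1 ∈ P ∧ t.2.1 ∈ P ∧ t.2.2.1 ∈ M ∧ t.2.2.2 ∈ M
      ∧ (t.1 : ZMod p) * t.2.2.1 = (t.2.1 : ZMod p) * t.2.2.2 := by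
    intro t ht
    rw [hFdef, Finset.mem_filter, Finset.mem_product, Finset.mem_product, Finset.mem_product] at ht
    exact ⟨ht.1.1, ht.1.2.1, ht.1.2.2.1, ht.1.2.2.2, ht.2⟩
  have hq0 : ∀ q ∈ P, (q : ZMod p) ≠ 0 := by
    intro q hq h0
    rw [hPdef, Finset.mem_filter, Finset.mem_Icc] at hq
    have := (ZMod.natCast_eq_zero_iff q p).mp h0
    have := Nat.le_of_dvd (by omega) this
    omega
  have hsplit : F.card = (F.filter (fun t => t.1 = t.2.1)).card
      + (F.filter (fun t => ¬ t.1 = t.2.1)).card :=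
    (Finset.card_filter_add_card_filter_not _).symm
  -- diagonal
  have hdiagfix : ∀ t ∈ F.filter (fun t => t.1 = t.2.1), t.2.2.2 = t.2.2.1 := by
    intro t ht
    rw [Finset.mem_filter] at ht
    obtain ⟨htF, htd⟩ := ht
    obtain ⟨h1, h2, h3, h4, h5⟩ := hmemF t htF
    have := h5
    rw [← htd] at this
    exact (mul_left_cancel₀ (hq0 t.1 h1) this).symm
  have hdiag : (F.filter (fun t => t.1 = t.2.1)).card ≤ P.card * M.card := by
    rw [← Finset.card_product]
    apply Finset.card_le_card_of_injOn (fun t => (t.1, t.2.2.1))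
    · intro t ht
      rw [Finset.mem_coe, Finset.mem_filter] at ht
      obtain ⟨h1, h2, h3, _, _⟩ := hmemF t ht.1
      exact Finset.mem_product.mpr ⟨h1, h3⟩
    · intro t ht t' ht' heq
      simp only [Prod.mk.injEq] at heq
      have hd := (Finset.mem_filter.mp ht).2
      have hd' := (Finset.mem_filter.mp ht').2
      have he := hdiagfix t (by simpa using ht)
      have he' := hdiagfix t' (by simpa using ht')
      have : t.2 = t'.2 := by
        apply Prod.ext
        · rw [← hd, ← hd', heq.1]
        · apply Prod.ext
          · exact heq.2
          · rw [he, he', heq.2]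
      exact Prod.ext heq.1 this
  -- off-diagonal
  have hoffd : ((F.filter (fun t => ¬ t.1 = t.2.1)).card : ℝ)
      ≤ (M.card : ℝ)^2 * (1 + 5 * (N:ℝ)^2 / p) := by
    set O := F.filter (fun t => ¬ t.1 = t.2.1) with hOdef
    have hfib : O.card = ∑ y ∈ M ×ˢ M, (O.filter (fun t => t.2.2 = y)).card := by
      apply Finset.card_eq_sum_card_fiberwise
      intro t ht
      rw [Finset.mem_coe, hOdef, Finset.mem_filter] at ht
      obtain ⟨_, _, h3, h4, _⟩ := hmemF t ht.1
      exact Finset.mem_product.mpr ⟨h3, h4⟩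
    have hperfib : ∀ y ∈ M ×ˢ M, ((O.filter (fun t => t.2.2 = y)).card : ℝ)
        ≤ 1 + 5 * (N:ℝ)^2 / p := by
      intro y hy
      rw [Finset.mem_product] at hy
      refine le_trans ?_ (key_count p N hp hN2 hNp y.1 y.2 (hM y.1 hy.1) (hM y.2 hy.2))
      have hinj : (O.filter (fun t => t.2.2 = y)).card ≤
          (((P ×ˢ P).filter
            (fun x : ℕ × ℕ => x.1 ≠ x.2 ∧ (x.1 : ZMod p) * y.1 = (x.2 : ZMod p) * y.2)).card) := by
        apply Finset.card_le_card_of_injOn (fun t => (t.1, t.2.1))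
        · intro t ht
          rw [Finset.mem_coe, Finset.mem_filter, hOdef, Finset.mem_filter] at ht
          obtain ⟨⟨htF, htne⟩, hty⟩ := ht
          obtain ⟨h1, h2, _, _, h5⟩ := hmemF t htF
          rw [Finset.mem_coe, Finset.mem_filter, Finset.mem_product]
          rw [hty] at h5
          exact ⟨⟨h1, h2⟩, htne, h5⟩
        · intro t ht t' ht' heq
          simp only [Prod.mk.injEq] at heq
          have hy1 := (Finset.mem_filter.mp ht).2
          have hy2 := (Finset.mem_filter.mp ht').2
          exact Prod.ext heq.1 (Prod.ext heq.2 (by rw [hy1, hy2]))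
      exact_mod_cast hinj
    have hsum : ((O.card : ℝ)) ≤ (Finset.card (M ×ˢ M) : ℝ) * (1 + 5 * (N:ℝ)^2 / p) := by
      rw [hfib]
      push_cast
      calc ∑ y ∈ M ×ˢ M, ((O.filter (fun t => t.2.2 = y)).card : ℝ)
          ≤ ∑ y ∈ M ×ˢ M, (1 + 5 * (N:ℝ)^2 / p) := Finset.sum_le_sum hperfib
        _ = (Finset.card (M ×ˢ M) : ℝ) * (1 + 5 * (N:ℝ)^2 / p) := by
            rw [Finset.sum_const, nsmul_eq_mul]
    calc ((O.card : ℝ)) ≤ (Finset.card (M ×ˢ M) : ℝ) * (1 + 5 * (N:ℝ)^2 / p) := hsum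
      _ = (M.card : ℝ)^2 * (1 + 5 * (N:ℝ)^2 / p) := by
          rw [Finset.card_product]; push_cast; ring
  -- assemble
  have hN1 : (1:ℝ) < N := by exact_mod_cast hN2.trans_lt' one_lt_two
  have hlogN : 0 < Real.log N := Real.log_pos hN1
  have hp0 : (0:ℝ) < p := by exact_mod_cast hp.pos
  have hchebR : ((P.card : ℝ)) ≤ 5 * N / Real.log N := cheb N hN2
  have hdiagR : ((F.filter (fun t => t.1 = t.2.1)).card : ℝ)
      ≤ (5 * N / Real.log N) * M.card := by
    calc ((F.filter (fun t => t.1 = t.2.1)).card : ℝ) ≤ (P.card : ℝ) * M.card := by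
          exact_mod_cast hdiag
      _ ≤ (5 * N / Real.log N) * M.card :=
          mul_le_mul_of_nonneg_right hchebR (Nat.cast_nonneg _)
  have hFR : (F.card : ℝ) = ((F.filter (fun t => t.1 = t.2.1)).card : ℝ)
      + ((F.filter (fun t => ¬ t.1 = t.2.1)).card : ℝ) := by exact_mod_cast hsplit
  have hM2 : (0:ℝ) ≤ (M.card : ℝ)^2 := by positivity
  have hterm : (M.card : ℝ)^2 * (1 + 5 * (N:ℝ)^2 / p)
      = (M.card : ℝ)^2 + 5 * ((N:ℝ)^2 * (M.card : ℝ)^2 / p) := by ring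
  rw [hFR]
  have h1 : (5 * (N:ℝ) / Real.log N) * M.card = 5 * ((N:ℝ) * M.card / Real.log N) := by ring
  calc ((F.filter (fun t => t.1 = t.2.1)).card : ℝ)
      + ((F.filter (fun t => ¬ t.1 = t.2.1)).card : ℝ)
      ≤ (5 * N / Real.log N) * M.card + (M.card : ℝ)^2 * (1 + 5 * (N:ℝ)^2 / p) := by
        linarith [hdiagR, hoffd]
    _ = 5 * ((N:ℝ) * M.card / Real.log N) + (M.card : ℝ)^2 + 5 * ((N:ℝ)^2 * (M.card : ℝ)^2 / p) := by
        rw [hterm]; ring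
    _ ≤ 5 * ((N : ℝ) * M.card / Real.log N + (M.card : ℝ) ^ 2
            + (N : ℝ) ^ 2 * (M.card : ℝ) ^ 2 / p) := by linarith
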